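/- arXiv:2507.19010 — 5 statements merged into one kernel-verified Lean document; each statement's English description precedes it below -/
import Mathlib

section
/- For all integers x, y, z and every natural number k, 2^k · (x XOR y XOR z) + 2^(k+1) · ((x AND y) OR (x AND z) OR (y AND z)) = 2^k · (x + y + z). -/
instance : XorOp ℤ := ⟨Int.xor⟩
instance : AndOp ℤ := ⟨Int.land⟩
instance : OrOp ℤ := ⟨Int.lor⟩

namespace WeightedAdd3Aux

lemma hxor_def (x y : ℤ) : x ^^^ y = Int.xor x y := rfl
lemma hand_def (x y : ℤ) : x &&& y = Int.land x y := rfl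
lemma hor_def (x y : ℤ) : x ||| y = Int.lor x y := rfl

/-- measure: distance to the fixed points 0 and -1 of `div2`. -/
def msr : ℤ → ℕ
  | (n : ℕ) => n
  | Int.negSucc n => n

lemma msr_div2 (x : ℤ) : msr (Int.div2 x) = msr x / 2 := by
  cases x with
  | ofNat n => show Nat.div2 n = n / 2; exact n.div2_val
  | negSucc n => show Nat.div2 n = n / 2; exact n.div2_val

lemma msr_eq_zero {x : ℤ} (h : msr x = 0) : x = 0 ∨ x = -1 := by
  cases x with
  | ofNat n =>
    left
    have hn : n = 0 := h
    simp [hn]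
  | negSucc n =>
    right
    have hn : n = 0 := h
    subst hn
    rfl

lemma step (a b c : Bool) (m n p : ℤ)
    (h : ((m ^^^ n) ^^^ p) + 2 * (((m &&& n) ||| (m &&& p)) ||| (n &&& p)) = m + n + p) :
    ((Int.bit a m ^^^ Int.bit b n) ^^^ Int.bit c p)
      + 2 * (((Int.bit a m &&& Int.bit b n) ||| (Int.bit a m &&& Int.bit c p))
          ||| (Int.bit b n &&& Int.bit c p))
      = Int.bit a m + Int.bit b n + Int.bit c p := by
  simp only [hxor_def, hand_def, hor_def] at h ⊢
  rw [Int.lxor_bit, Int.lxor_bit, Int.land_bit, Int.land_bit, Int.land_bit,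
    Int.lor_bit, Int.lor_bit]
  simp only [Int.bit_val]
  cases a <;> cases b <;> cases c <;> simp <;> linarith

lemma add3 : ∀ (N : ℕ) (x y z : ℤ), msr x + msr y + msr z ≤ N →
    ((x ^^^ y) ^^^ z) + 2 * (((x &&& y) ||| (x &&& z)) ||| (y &&& z)) = x + y + z := by
  intro N
  induction N with
  | zero =>
    intro x y z h
    have hx := msr_eq_zero (x := x) (by omega)
    have hy := msr_eq_zero (x := y) (by omega)
    have hz := msr_eq_zero (x := z) (by omega)
    rcases hx with rfl | rfl <;> rcases hy with rfl | rfl <;> rcases hz with rfl | rfl <;>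
      simp only [hxor_def, hand_def, hor_def,
        show (-1:ℤ) = Int.negSucc 0 from rfl, show (0:ℤ) = Int.ofNat 0 from rfl] <;>
      simp only [Int.xor, Int.land, Int.lor, Nat.xor, Nat.land, Nat.lor, Nat.ldiff,
        Nat.bitwise_zero, Nat.bitwise_zero_left, Nat.bitwise_zero_right, if_false, if_true,
        Bool.bne_false, Bool.and_false, Bool.false_and, Bool.or_false, Bool.false_or] <;>
      norm_num <;> rfl
  | succ N ih =>
    intro x y z h
    by_cases hle : msr x + msr y + msr z ≤ N
    · exact ih x y z hle
    · have h2 : msr (Int.div2 x) + msr (Int.div2 y) + msr (Int.div2 z) ≤ N := by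
        rw [msr_div2, msr_div2, msr_div2]; omega
      have key := step (Int.bodd x) (Int.bodd y) (Int.bodd z) (Int.div2 x) (Int.div2 y)
        (Int.div2 z) (ih _ _ _ h2)
      rwa [Int.bit_decomp, Int.bit_decomp, Int.bit_decomp] at key

end WeightedAdd3Aux

/-- Weighted Add-3: 2^k·(x ⊕ y ⊕ z) + 2^(k+1)·maj(x,y,z) = 2^k·(x + y + z). -/
theorem weighted_add3 (x y z : ℤ) (k : ℕ) :
    2 ^ k * ((x ^^^ y) ^^^ z)
      + 2 ^ (k + 1) * (((x &&& y) ||| (x &&& z)) ||| (y &&& z))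
      = 2 ^ k * (x + y + z) := by
  have h := WeightedAdd3Aux.add3 _ x y z le_rfl
  rw [pow_succ]
  linear_combination ((2 : ℤ) ^ k) * h
end

section
/- Let n be a natural number and let L be a list of integers. If x, y, z are integers, then the sum of the list whose elements are ((x XOR y XOR z) mod 2^n), ((2 · ((x AND y) OR (x AND z) OR (y AND z))) mod 2^n), followed by the elements of L, is congruent modulo 2^n to the sum of the list whose elements are x, y, z followed by the elements of L. -/
private def cf (x y z : ℤ) : ℤ :=
  x + y + z - (Int.xor (Int.xor x y) z)
    - 2 * (Int.lor (Int.lor (Int.land x y) (Int.land x z)) (Int.land y z))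

private theorem cf_bit (a b c : Bool) (x y z : ℤ) :
    cf (Int.bit a x) (Int.bit b y) (Int.bit c z) = 2 * cf x y z := by
  unfold cf
  rw [Int.lxor_bit, Int.lxor_bit, Int.land_bit, Int.land_bit, Int.land_bit,
    Int.lor_bit, Int.lor_bit, Int.bit_val, Int.bit_val, Int.bit_val, Int.bit_val,
    Int.bit_val]
  rcases a <;> rcases b <;> rcases c <;> simp <;> ring

private theorem cf_dvd (k : ℕ) (x y z : ℤ) : (2 : ℤ) ^ k ∣ cf x y z := by
  induction k generalizing x y z with
  | zero => simp
  | succ k ih =>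
    rw [← Int.bit_decomp x, ← Int.bit_decomp y, ← Int.bit_decomp z, cf_bit, pow_succ,
      mul_comm ((2:ℤ)^k)]
    exact mul_dvd_mul_left 2 (ih _ _ _)

private theorem cf_eq_zero (x y z : ℤ) : cf x y z = 0 := by
  by_contra h
  have h1 : (2:ℕ) ^ (cf x y z).natAbs ∣ (cf x y z).natAbs := by
    have := Int.natAbs_dvd_natAbs.mpr (cf_dvd (cf x y z).natAbs x y z)
    rw [Int.natAbs_pow] at this; exact this
  have h2 := Nat.le_of_dvd (Int.natAbs_pos.mpr h) h1
  have h3 : (cf x y z).natAbs < 2 ^ (cf x y z).natAbs := Nat.lt_two_pow_self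
  omega

/-- A compression-tree reduction step replacing x, y, z in a list by the truncated
    sum and shifted-carry vectors preserves the list sum modulo 2^n. -/
theorem compress_step_list (n : ℕ) (L : List ℤ) (x y z : ℤ) :
    ((((x ^^^ y) ^^^ z) % 2 ^ n)
        :: ((2 * (((x &&& y) ||| (x &&& z)) ||| (y &&& z))) % 2 ^ n)
        :: L).sum
      ≡ (x :: y :: z :: L).sum [ZMOD (2 ^ n)] := by
  have key : ((x ^^^ y) ^^^ z) + 2 * (((x &&& y) ||| (x &&& z)) ||| (y &&& z))
      = x + y + z := by
    have := cf_eq_zero x y z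
    unfold cf at this
    show Int.xor (Int.xor x y) z + 2 * Int.lor (Int.lor (Int.land x y) (Int.land x z)) (Int.land y z) = _
    linarith
  simp only [List.sum_cons]
  have h1 : (((x ^^^ y) ^^^ z) % 2 ^ n) ≡ ((x ^^^ y) ^^^ z) [ZMOD (2^n)] :=
    Int.emod_emod_of_dvd _ dvd_rfl
  have h2 : ((2 * (((x &&& y) ||| (x &&& z)) ||| (y &&& z))) % 2 ^ n)
      ≡ (2 * (((x &&& y) ||| (x &&& z)) ||| (y &&& z))) [ZMOD (2^n)] :=
    Int.emod_emod_of_dvd _ dvd_rfl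
  calc _ ≡ ((x ^^^ y) ^^^ z) + ((2 * (((x &&& y) ||| (x &&& z)) ||| (y &&& z))) + L.sum)
        [ZMOD (2^n)] := (h1.add (h2.add (Int.ModEq.refl _)))
    _ = x + (y + (z + L.sum)) := by rw [← add_assoc, key]; ring
end

section
/- For all integers pp0, pp1, pp2, pp3, pp4, pp5, pp6, pp7, define (with all 'mod' reductions being nonnegative remainders modulo 2^16, XOR/AND/OR bitwise on two's-complement integers, and maj(x,y,z) = (x AND y) OR (x AND z) OR (y AND z)): l1pp0 = (pp0 XOR pp1 XOR pp2) mod 2^16, l1pp1 = (2·maj(pp0,pp1,pp2)) mod 2^16, l1pp2 = (pp3 XOR pp4 XOR pp5) mod 2^16, l1pp3 = (2·maj(pp3,pp4,pp5)) mod 2^16; l2pp0 = (l1pp0 XOR l1pp1 XOR l1pp2) mod 2^16, l2pp1 = (2·maj(l1pp0,l1pp1,l1pp2)) mod 2^16, l2pp2 = (l1pp3 XOR pp6 XOR pp7) mod 2^16, l2pp3 = (2·maj(l1pp3,pp6,pp7)) mod 2^16; l3pp0 = (l2pp0 XOR l2pp1 XOR l2pp2) mod 2^16, l3pp1 = (2·maj(l2pp0,l2pp1,l2pp2))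 mod 2^16, l3pp2 = l2pp3; l4pp0 = (l3pp0 XOR l3pp1 XOR l3pp2) mod 2^16, l4pp1 = (2·maj(l3pp0,l3pp1,l3pp2)) mod 2^16. Then (l4pp0 + l4pp1) mod 2^16 = (pp0 + pp1 + pp2 + pp3 + pp4 + pp5 + pp6 + pp7) mod 2^16. -/
/-- Bitwise majority of three integers. -/
def maj (x y z : ℤ) : ℤ := ((x &&& y) ||| (x &&& z)) ||| (y &&& z)

/-- majority written with the core `Int` operations. -/
def majI (x y z : ℤ) : ℤ :=
  Int.lor (Int.lor (Int.land x y) (Int.land x z)) (Int.land y z)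

lemma nat_ldiff00 : Nat.ldiff 0 0 = 0 := by simp [Nat.ldiff, Nat.bitwise]

lemma ixor00 : Int.xor 0 0 = 0 := by
  rw [show Int.xor 0 0 = ((0 ^^^ 0 : ℕ) : ℤ) from rfl]; simp
lemma ixor01 : Int.xor 0 (-1) = -1 := by
  rw [show Int.xor 0 (-1) = Int.negSucc (0 ^^^ 0) from rfl]; simp
lemma ixor10 : Int.xor (-1) 0 = -1 := by
  rw [show Int.xor (-1) 0 = Int.negSucc (0 ^^^ 0) from rfl]; simp
lemma ixor11 : Int.xor (-1) (-1) = 0 := by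
  rw [show Int.xor (-1) (-1) = ((0 ^^^ 0 : ℕ) : ℤ) from rfl]; simp
lemma iland00 : Int.land 0 0 = 0 := by
  rw [show Int.land 0 0 = ((0 &&& 0 : ℕ) : ℤ) from rfl]; simp
lemma iland01 : Int.land 0 (-1) = 0 := by
  rw [show Int.land 0 (-1) = ((Nat.ldiff 0 0 : ℕ) : ℤ) from rfl, nat_ldiff00]; simp
lemma iland10 : Int.land (-1) 0 = 0 := by
  rw [show Int.land (-1) 0 = ((Nat.ldiff 0 0 : ℕ) : ℤ) from rfl, nat_ldiff00]; simp
lemma iland11 : Int.land (-1) (-1) = -1 := by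
  rw [show Int.land (-1) (-1) = Int.negSucc (0 ||| 0) from rfl]; simp
lemma ilor00 : Int.lor 0 0 = 0 := by
  rw [show Int.lor 0 0 = ((0 ||| 0 : ℕ) : ℤ) from rfl]; simp
lemma ilor01 : Int.lor 0 (-1) = -1 := by
  rw [show Int.lor 0 (-1) = Int.negSucc (Nat.ldiff 0 0) from rfl, nat_ldiff00]; simp
lemma ilor10 : Int.lor (-1) 0 = -1 := by
  rw [show Int.lor (-1) 0 = Int.negSucc (Nat.ldiff 0 0) from rfl, nat_ldiff00]; simp
lemma ilor11 : Int.lor (-1) (-1) = -1 := by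
  rw [show Int.lor (-1) (-1) = Int.negSucc (0 &&& 0) from rfl]; simp

lemma div2_natAbs_le (x : ℤ) : (Int.div2 x).natAbs ≤ x.natAbs := by
  cases x with
  | ofNat n => simp [Int.div2, Nat.div2_val]; omega
  | negSucc n => simp [Int.div2, Nat.div2_val]; omega

lemma div2_natAbs_lt {x : ℤ} (h0 : x ≠ 0) (h1 : x ≠ -1) :
    (Int.div2 x).natAbs < x.natAbs := by
  cases x with
  | ofNat n =>
    have hn : n ≠ 0 := by rintro rfl; exact h0 rfl
    simp [Int.div2, Nat.div2_val]; omega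
  | negSucc n =>
    have hn : n ≠ 0 := by rintro rfl; exact h1 rfl
    simp [Int.div2, Nat.div2_val]; omega

lemma csaI : ∀ x y z : ℤ,
    Int.xor (Int.xor x y) z + 2 * majI x y z = x + y + z := by
  have key : ∀ n : ℕ, ∀ x y z : ℤ, x.natAbs + y.natAbs + z.natAbs ≤ n →
      Int.xor (Int.xor x y) z + 2 * majI x y z = x + y + z := by
    intro n
    induction n with
    | zero =>
      intro x y z h
      have hx : x = 0 := Int.natAbs_eq_zero.mp (by omega)
      have hy : y = 0 := Int.natAbs_eq_zero.mp (by omega)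
      have hz : z = 0 := Int.natAbs_eq_zero.mp (by omega)
      subst hx; subst hy; subst hz
      simp [majI, ixor00, iland00, ilor00]
    | succ n ih =>
      intro x y z h
      by_cases hb : (x = 0 ∨ x = -1) ∧ (y = 0 ∨ y = -1) ∧ (z = 0 ∨ z = -1)
      · obtain ⟨hx | hx, (hy | hy), (hz | hz)⟩ := hb <;>
          subst hx <;> subst hy <;> subst hz <;>
          simp only [majI, ixor00, ixor01, ixor10, ixor11, iland00, iland01,
            iland10, iland11, ilor00, ilor01, ilor10, ilor11] <;> norm_num
      · have hxle := div2_natAbs_le x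
        have hyle := div2_natAbs_le y
        have hzle := div2_natAbs_le z
        have hlt : (Int.div2 x).natAbs + (Int.div2 y).natAbs + (Int.div2 z).natAbs ≤ n := by
          push_neg at hb
          by_cases hx0 : x = 0 ∨ x = -1
          · by_cases hy0 : y = 0 ∨ y = -1
            · have hz0 := hb hx0 hy0
              have := div2_natAbs_lt hz0.1 hz0.2
              omega
            · push_neg at hy0
              have := div2_natAbs_lt hy0.1 hy0.2
              omega
          · push_neg at hx0
            have := div2_natAbs_lt hx0.1 hx0.2
            omega
        have ih' := ih (Int.div2 x) (Int.div2 y) (Int.div2 z) hlt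
        rw [← Int.bit_decomp x, ← Int.bit_decomp y, ← Int.bit_decomp z]
        simp only [majI, Int.lxor_bit, Int.land_bit, Int.lor_bit]
        simp only [Int.bit_val]
        simp only [majI] at ih'
        cases x.bodd <;> cases y.bodd <;> cases z.bodd <;> simp <;> omega
  exact fun x y z => key (x.natAbs + y.natAbs + z.natAbs) x y z le_rfl

lemma csa (x y z : ℤ) : ((x ^^^ y) ^^^ z) + 2 * maj x y z = x + y + z :=
  csaI x y z

/-- compress-lemma-8x8: the 8×8 multiplier compression tree sums its eight
    16-bit partial products modulo 2^16. -/
theorem compress_lemma_8x8 (pp0 pp1 pp2 pp3 pp4 pp5 pp6 pp7 : ℤ) :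
    let l1pp0 := ((pp0 ^^^ pp1) ^^^ pp2) % 2 ^ 16
    let l1pp1 := (2 * maj pp0 pp1 pp2) % 2 ^ 16
    let l1pp2 := ((pp3 ^^^ pp4) ^^^ pp5) % 2 ^ 16
    let l1pp3 := (2 * maj pp3 pp4 pp5) % 2 ^ 16
    let l2pp0 := ((l1pp0 ^^^ l1pp1) ^^^ l1pp2) % 2 ^ 16
    let l2pp1 := (2 * maj l1pp0 l1pp1 l1pp2) % 2 ^ 16
    let l2pp2 := ((l1pp3 ^^^ pp6) ^^^ pp7) % 2 ^ 16
    let l2pp3 := (2 * maj l1pp3 pp6 pp7) % 2 ^ 16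
    let l3pp0 := ((l2pp0 ^^^ l2pp1) ^^^ l2pp2) % 2 ^ 16
    let l3pp1 := (2 * maj l2pp0 l2pp1 l2pp2) % 2 ^ 16
    let l3pp2 := l2pp3
    let l4pp0 := ((l3pp0 ^^^ l3pp1) ^^^ l3pp2) % 2 ^ 16
    let l4pp1 := (2 * maj l3pp0 l3pp1 l3pp2) % 2 ^ 16
    (l4pp0 + l4pp1) % 2 ^ 16
      = (pp0 + pp1 + pp2 + pp3 + pp4 + pp5 + pp6 + pp7) % 2 ^ 16 := by
  intro l1pp0 l1pp1 l1pp2 l1pp3 l2pp0 l2pp1 l2pp2 l2pp3 l3pp0 l3pp1 l3pp2 l4pp0 l4pp1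
  have e : ∀ x : ℤ, x % 2 ^ 16 ≡ x [ZMOD (2 ^ 16 : ℤ)] := fun x =>
    Int.emod_emod_of_dvd x dvd_rfl
  have step : ∀ a b c : ℤ,
      (((a ^^^ b) ^^^ c) % 2 ^ 16) + ((2 * maj a b c) % 2 ^ 16)
        ≡ a + b + c [ZMOD (2 ^ 16 : ℤ)] := by
    intro a b c
    calc (((a ^^^ b) ^^^ c) % 2 ^ 16) + ((2 * maj a b c) % 2 ^ 16)
        ≡ ((a ^^^ b) ^^^ c) + 2 * maj a b c [ZMOD (2 ^ 16 : ℤ)] := (e _).add (e _)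
      _ = a + b + c := csa a b c
  have c1 : l1pp0 + l1pp1 ≡ pp0 + pp1 + pp2 [ZMOD (2 ^ 16 : ℤ)] := step _ _ _
  have c2 : l1pp2 + l1pp3 ≡ pp3 + pp4 + pp5 [ZMOD (2 ^ 16 : ℤ)] := step _ _ _
  have c3 : l2pp0 + l2pp1 ≡ l1pp0 + l1pp1 + l1pp2 [ZMOD (2 ^ 16 : ℤ)] := step _ _ _
  have c4 : l2pp2 + l2pp3 ≡ l1pp3 + pp6 + pp7 [ZMOD (2 ^ 16 : ℤ)] := step _ _ _
  have c5 : l3pp0 + l3pp1 ≡ l2pp0 + l2pp1 + l2pp2 [ZMOD (2 ^ 16 : ℤ)] := step _ _ _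
  have c6 : l4pp0 + l4pp1 ≡ l3pp0 + l3pp1 + l3pp2 [ZMOD (2 ^ 16 : ℤ)] := step _ _ _
  have final : l4pp0 + l4pp1 ≡ pp0 + pp1 + pp2 + pp3 + pp4 + pp5 + pp6 + pp7
      [ZMOD (2 ^ 16 : ℤ)] := by
    calc l4pp0 + l4pp1 ≡ l3pp0 + l3pp1 + l3pp2 [ZMOD (2 ^ 16 : ℤ)] := c6
      _ ≡ (l2pp0 + l2pp1 + l2pp2) + l2pp3 [ZMOD (2 ^ 16 : ℤ)] := c5.add_right _
      _ = (l2pp0 + l2pp1) + (l2pp2 + l2pp3) := by ring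
      _ ≡ (l1pp0 + l1pp1 + l1pp2) + (l1pp3 + pp6 + pp7) [ZMOD (2 ^ 16 : ℤ)] :=
          c3.add c4
      _ = (l1pp0 + l1pp1) + (l1pp2 + l1pp3) + (pp6 + pp7) := by ring
      _ ≡ (pp0 + pp1 + pp2) + (pp3 + pp4 + pp5) + (pp6 + pp7)
          [ZMOD (2 ^ 16 : ℤ)] := (c1.add c2).add_right _
      _ = pp0 + pp1 + pp2 + pp3 + pp4 + pp5 + pp6 + pp7 := by ring
  exact final
end

section
/- Let a and b be natural numbers with a < 2^8 and b < 2^8, and for i = 0,…,7 let pp_i = 2^i · a · bit_i(b), where bit_i(b) ∈ {0,1} is the i-th bit of b. Define (with all 'mod' being remainders modulo 2^16, XOR/AND/OR bitwise, and maj(x,y,z) = (x AND y) OR (x AND z) OR (y AND z)): l1pp0 = (pp0 XOR pp1 XOR pp2) mod 2^16, l1pp1 = (2·maj(pp0,pp1,pp2)) mod 2^16, l1pp2 = (pp3 XOR pp4 XOR pp5) mod 2^16, l1pp3 = (2·maj(pp3,pp4,pp5)) mod 2^16; l2pp0 = (l1pp0 XOR l1pp1 XOR l1pp2) mod 2^16,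 l2pp1 = (2·maj(l1pp0,l1pp1,l1pp2)) mod 2^16, l2pp2 = (l1pp3 XOR pp6 XOR pp7) mod 2^16, l2pp3 = (2·maj(l1pp3,pp6,pp7)) mod 2^16; l3pp0 = (l2pp0 XOR l2pp1 XOR l2pp2) mod 2^16, l3pp1 = (2·maj(l2pp0,l2pp1,l2pp2)) mod 2^16, l3pp2 = l2pp3; l4pp0 = (l3pp0 XOR l3pp1 XOR l3pp2) mod 2^16, l4pp1 = (2·maj(l3pp0,l3pp1,l3pp2)) mod 2^16. Then (l4pp0 + l4pp1) mod 2^16 = a · b. -/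
theorem nat_add_xor : ∀ x y : ℕ, (x ^^^ y) + 2 * (x &&& y) = x + y := by
  intro x
  induction x using Nat.binaryRec with
  | zero => intro y; simp
  | bit b n ih =>
    intro y
    induction y using Nat.binaryRec with
    | zero => simp
    | bit c m _ =>
      have h := ih m
      rw [Nat.xor_bit, Nat.land_bit, Nat.bit_val, Nat.bit_val, Nat.bit_val, Nat.bit_val]
      cases b <;> cases c <;> simp <;> omega

theorem natA (x y z : ℕ) : ((x^^^y) &&& z) ^^^ (x &&& y) = ((x&&&y) ||| (x&&&z)) ||| (y&&&z) := by
  apply Nat.eq_of_testBit_eq; intro i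
  simp only [Nat.testBit_xor, Nat.testBit_and, Nat.testBit_or]
  cases x.testBit i <;> cases y.testBit i <;> cases z.testBit i <;> rfl

theorem natB (x y z : ℕ) : ((x^^^y) &&& z) &&& (x &&& y) = 0 := by
  apply Nat.eq_of_testBit_eq; intro i
  simp only [Nat.testBit_xor, Nat.testBit_and, Nat.testBit_zero, Nat.zero_testBit]
  cases x.testBit i <;> cases y.testBit i <;> cases z.testBit i <;> rfl

theorem nat_csa (x y z : ℕ) :
    ((x^^^y)^^^z) + 2*(((x&&&y)|||(x&&&z))|||(y&&&z)) = x+y+z := by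
  have h1 := nat_add_xor x y
  have h2 := nat_add_xor (x^^^y) z
  have h3 := nat_add_xor ((x^^^y)&&&z) (x&&&y)
  rw [natA, natB] at h3
  omega

theorem cxor (m n : ℕ) : (m:ℤ) ^^^ (n:ℤ) = ((m ^^^ n : ℕ) : ℤ) := rfl
theorem cand (m n : ℕ) : (m:ℤ) &&& (n:ℤ) = ((m &&& n : ℕ) : ℤ) := rfl
theorem cor (m n : ℕ) : (m:ℤ) ||| (n:ℤ) = ((m ||| n : ℕ) : ℤ) := rfl

theorem int_csa (x y z : ℤ) (hx : 0 ≤ x) (hy : 0 ≤ y) (hz : 0 ≤ z) :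
    ((x^^^y)^^^z) + 2 * maj x y z = x + y + z := by
  obtain ⟨x, rfl⟩ := Int.eq_ofNat_of_zero_le hx
  obtain ⟨y, rfl⟩ := Int.eq_ofNat_of_zero_le hy
  obtain ⟨z, rfl⟩ := Int.eq_ofNat_of_zero_le hz
  simp only [maj, cxor, cand, cor]
  exact_mod_cast nat_csa x y z

theorem key (x y z : ℤ) (hx : 0 ≤ x) (hy : 0 ≤ y) (hz : 0 ≤ z) :
    ((x^^^y)^^^z) % 2^16 + (2 * maj x y z) % 2^16 ≡ x + y + z [ZMOD 2^16] := by
  have t : ∀ w : ℤ, w % 2^16 ≡ w [ZMOD 2^16] := fun w => Int.emod_emod_of_dvd w dvd_rfl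
  calc ((x^^^y)^^^z) % 2^16 + (2 * maj x y z) % 2^16
      ≡ ((x^^^y)^^^z) + 2 * maj x y z [ZMOD 2^16] := (t _).add (t _)
    _ = x + y + z := int_csa x y z hx hy hz

/-- End-to-end correctness of the 8×8 integer multiplier (computeProd). -/
theorem computeProd_correct (a b : ℕ) (ha : a < 2 ^ 8) (hb : b < 2 ^ 8) :
    let pp : ℕ → ℤ := fun i => 2 ^ i * (a : ℤ) * ((b.testBit i).toNat : ℤ)
    let l1pp0 := ((pp 0 ^^^ pp 1) ^^^ pp 2) % 2 ^ 16
    let l1pp1 := (2 * maj (pp 0) (pp 1) (pp 2)) % 2 ^ 16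
    let l1pp2 := ((pp 3 ^^^ pp 4) ^^^ pp 5) % 2 ^ 16
    let l1pp3 := (2 * maj (pp 3) (pp 4) (pp 5)) % 2 ^ 16
    let l2pp0 := ((l1pp0 ^^^ l1pp1) ^^^ l1pp2) % 2 ^ 16
    let l2pp1 := (2 * maj l1pp0 l1pp1 l1pp2) % 2 ^ 16
    let l2pp2 := ((l1pp3 ^^^ pp 6) ^^^ pp 7) % 2 ^ 16
    let l2pp3 := (2 * maj l1pp3 (pp 6) (pp 7)) % 2 ^ 16
    let l3pp0 := ((l2pp0 ^^^ l2pp1) ^^^ l2pp2) % 2 ^ 16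
    let l3pp1 := (2 * maj l2pp0 l2pp1 l2pp2) % 2 ^ 16
    let l3pp2 := l2pp3
    let l4pp0 := ((l3pp0 ^^^ l3pp1) ^^^ l3pp2) % 2 ^ 16
    let l4pp1 := (2 * maj l3pp0 l3pp1 l3pp2) % 2 ^ 16
    (l4pp0 + l4pp1) % 2 ^ 16 = (a : ℤ) * (b : ℤ) := by
  intro pp l1pp0 l1pp1 l1pp2 l1pp3 l2pp0 l2pp1 l2pp2 l2pp3 l3pp0 l3pp1 l3pp2 l4pp0 l4pp1
  have hp : ∀ i, 0 ≤ pp i := fun i => by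
    show (0:ℤ) ≤ 2 ^ i * (a : ℤ) * ((b.testBit i).toNat : ℤ)
    positivity
  have hm : ∀ w : ℤ, 0 ≤ w % (2^16 : ℤ) := fun w => Int.emod_nonneg w (by norm_num)
  have h10 : (0:ℤ) ≤ l1pp0 := hm _
  have h11 : (0:ℤ) ≤ l1pp1 := hm _
  have h12 : (0:ℤ) ≤ l1pp2 := hm _
  have h13 : (0:ℤ) ≤ l1pp3 := hm _
  have h20 : (0:ℤ) ≤ l2pp0 := hm _
  have h21 : (0:ℤ) ≤ l2pp1 := hm _
  have h22 : (0:ℤ) ≤ l2pp2 := hm _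
  have h30 : (0:ℤ) ≤ l3pp0 := hm _
  have h31 : (0:ℤ) ≤ l3pp1 := hm _
  have h32 : (0:ℤ) ≤ l3pp2 := hm _
  have H4 : l4pp0 + l4pp1 ≡ l3pp0 + l3pp1 + l3pp2 [ZMOD 2^16] := key _ _ _ h30 h31 h32
  have H3 : l3pp0 + l3pp1 ≡ l2pp0 + l2pp1 + l2pp2 [ZMOD 2^16] := key _ _ _ h20 h21 h22
  have H2 : l2pp0 + l2pp1 ≡ l1pp0 + l1pp1 + l1pp2 [ZMOD 2^16] := key _ _ _ h10 h11 h12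
  have H2' : l2pp2 + l2pp3 ≡ l1pp3 + pp 6 + pp 7 [ZMOD 2^16] := key _ _ _ h13 (hp 6) (hp 7)
  have H1 : l1pp0 + l1pp1 ≡ pp 0 + pp 1 + pp 2 [ZMOD 2^16] := key _ _ _ (hp 0) (hp 1) (hp 2)
  have H1' : l1pp2 + l1pp3 ≡ pp 3 + pp 4 + pp 5 [ZMOD 2^16] := key _ _ _ (hp 3) (hp 4) (hp 5)
  have hbsum : b/1%2 + 2*(b/2%2) + 4*(b/4%2) + 8*(b/8%2) + 16*(b/16%2) + 32*(b/32%2)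
      + 64*(b/64%2) + 128*(b/128%2) = b := by omega
  have hbZ := congrArg (Nat.cast : ℕ → ℤ) hbsum
  push_cast at hbZ
  have hpp : ∀ i, pp i = 2 ^ i * (a : ℤ) * ((b / 2^i % 2 : ℕ) : ℤ) := by
    intro i
    show 2 ^ i * (a : ℤ) * ((b.testBit i).toNat : ℤ) = _
    rw [Nat.toNat_testBit]
  have hsum : pp 0 + pp 1 + pp 2 + (pp 3 + pp 4 + pp 5) + (pp 6 + pp 7) = (a:ℤ) * b := by
    simp only [hpp]
    push_cast
    linear_combination (a:ℤ) * hbZ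
  have H : l4pp0 + l4pp1 ≡ (a:ℤ) * b [ZMOD 2^16] := by
    calc l4pp0 + l4pp1 ≡ l3pp0 + l3pp1 + l3pp2 [ZMOD 2^16] := H4
      _ = l3pp0 + l3pp1 + l2pp3 := rfl
      _ ≡ l2pp0 + l2pp1 + l2pp2 + l2pp3 [ZMOD 2^16] := H3.add_right _
      _ = l2pp0 + l2pp1 + (l2pp2 + l2pp3) := by ring
      _ ≡ l1pp0 + l1pp1 + l1pp2 + (l1pp3 + pp 6 + pp 7) [ZMOD 2^16] := H2.add H2'
      _ = l1pp0 + l1pp1 + (l1pp2 + l1pp3) + (pp 6 + pp 7) := by ring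
      _ ≡ pp 0 + pp 1 + pp 2 + (pp 3 + pp 4 + pp 5) + (pp 6 + pp 7) [ZMOD 2^16] :=
          ((H1.add H1').add_right _)
      _ = (a:ℤ) * b := hsum
  have hlt : (a:ℤ) * b < 2^16 := by
    have : a * b < 2^16 := by
      calc a * b ≤ 255 * 255 := Nat.mul_le_mul (by omega) (by omega)
        _ < 2^16 := by norm_num
    exact_mod_cast this
  have hnn : (0:ℤ) ≤ (a:ℤ) * b := by positivity
  calc (l4pp0 + l4pp1) % 2^16 = ((a:ℤ) * b) % 2^16 := H
    _ = (a:ℤ) * b := Int.emod_eq_of_lt hnn hlt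
end

section
/- For all integers x, y, z and every natural number n, ((((x XOR y XOR z) mod 2^n) + (((x AND y) OR (x AND z) OR (y AND z)) mod 2^(n−1)) · 2) mod 2^n) = (x + y + z) mod 2^n, for n ≥ 1. -/
open Int in
private def Fc (x y z : ℤ) : ℤ :=
  Int.xor (Int.xor x y) z
    + 2 * Int.lor (Int.lor (Int.land x y) (Int.land x z)) (Int.land y z)
    - (x + y + z)

open Int in
private lemma Fc_bit (a b c : Bool) (x y z : ℤ) :
    Fc (bit a x) (bit b y) (bit c z) = 2 * Fc x y z := by
  simp only [Fc, lxor_bit, land_bit, lor_bit]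
  simp only [bit_val]
  cases a <;> cases b <;> cases c <;> simp <;> ring

open Int in
private lemma Fc_div2 (x y z : ℤ) :
    Fc x y z = 2 * Fc (div2 x) (div2 y) (div2 z) := by
  conv_lhs => rw [← bit_decomp x, ← bit_decomp y, ← bit_decomp z]
  rw [Fc_bit]

open Int in
private lemma Fc_iter (k : ℕ) (x y z : ℤ) :
    Fc x y z = 2 ^ k * Fc (div2^[k] x) (div2^[k] y) (div2^[k] z) := by
  induction k generalizing x y z with
  | zero => simp
  | succ k ih =>
    rw [Fc_div2, ih]
    simp only [Function.iterate_succ_apply, pow_succ]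
    ring

open Int in
private lemma iter_div2_natCast (k m : ℕ) :
    div2^[k] (m : ℤ) = ((m / 2 ^ k : ℕ) : ℤ) := by
  induction k generalizing m with
  | zero => simp
  | succ k ih =>
    rw [Function.iterate_succ_apply]
    have h1 : div2 (m : ℤ) = ((m / 2 : ℕ) : ℤ) := by
      show ((m.div2 : ℕ) : ℤ) = _
      rw [Nat.div2_val]
    rw [h1, ih, Nat.div_div_eq_div_mul]
    congr 2
    rw [pow_succ]; ring

open Int in
private lemma iter_div2_negSucc (k m : ℕ) :
    div2^[k] (Int.negSucc m) = Int.negSucc (m / 2 ^ k) := by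
  induction k generalizing m with
  | zero => simp
  | succ k ih =>
    rw [Function.iterate_succ_apply]
    have h1 : div2 (Int.negSucc m) = Int.negSucc (m / 2) := by
      show Int.negSucc m.div2 = _
      rw [Nat.div2_val]
    rw [h1, ih, Nat.div_div_eq_div_mul]
    congr 2
    rw [pow_succ]; ring

open Int in
private lemma stab (w : ℤ) (k : ℕ) (h : w.natAbs ≤ k) :
    div2^[k] w = 0 ∨ div2^[k] w = -1 := by
  cases w with
  | ofNat m =>
    left
    rw [Int.ofNat_eq_natCast, iter_div2_natCast]
    have : m < 2 ^ k := lt_of_lt_of_le (Nat.lt_two_pow_self (n := m))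
      (Nat.pow_le_pow_right (by norm_num) (by simpa using h))
    rw [Nat.div_eq_of_lt this]; rfl
  | negSucc m =>
    right
    rw [iter_div2_negSucc]
    have : m < 2 ^ k := lt_of_lt_of_le (Nat.lt_two_pow_self (n := m))
      (Nat.pow_le_pow_right (by norm_num) (by simp at h; omega))
    rw [Nat.div_eq_of_lt this]; rfl

private lemma Fc_zero (x y z : ℤ) : Fc x y z = 0 := by
  have fix : ∀ u : ℤ, (u = 0 ∨ u = -1) → Int.div2 u = u := by
    rintro u (rfl | rfl) <;> rfl
  have base : ∀ u v w : ℤ, (u = 0 ∨ u = -1) → (v = 0 ∨ v = -1) → (w = 0 ∨ w = -1) →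
      Fc u v w = 0 := by
    intro u v w hu hv hw
    have h := Fc_div2 u v w
    rw [fix u hu, fix v hv, fix w hw] at h
    omega
  set k := x.natAbs + y.natAbs + z.natAbs with hk
  have h := Fc_iter k x y z
  rw [base _ _ _ (stab x k (by omega)) (stab y k (by omega)) (stab z k (by omega)),
    mul_zero] at h
  exact h

/-- Truncated 3:2 compressor step where the carry is truncated to n−1 bits before
    the left shift: the stage preserves the total sum modulo 2^n. -/
theorem truncated_add3_shift (x y z : ℤ) (n : ℕ) (hn : 1 ≤ n) :
    ((((x ^^^ y) ^^^ z) % 2 ^ n)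
        + ((((x &&& y) ||| (x &&& z)) ||| (y &&& z)) % 2 ^ (n - 1)) * 2) % 2 ^ n
      = (x + y + z) % 2 ^ n := by
  have hsum : x + y + z
      = ((x ^^^ y) ^^^ z) + 2 * (((x &&& y) ||| (x &&& z)) ||| (y &&& z)) := by
    have h := Fc_zero x y z
    simp only [Fc] at h
    show x + y + z = Int.xor (Int.xor x y) z
      + 2 * Int.lor (Int.lor (Int.land x y) (Int.land x z)) (Int.land y z)
    linarith
  set X := (x ^^^ y) ^^^ z with hX
  set M := ((x &&& y) ||| (x &&& z)) ||| (y &&& z) with hM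
  rw [hsum]
  have h2 : (2:ℤ) ^ (n-1) * 2 = 2 ^ n := by
    rw [← pow_succ]; congr 1; omega
  have hMdef : M % 2 ^ (n-1) = M - 2 ^ (n-1) * (M / 2 ^ (n-1)) := by
    rw [Int.emod_def]
  rw [Int.emod_add_emod, hMdef]
  have : X + (M - 2 ^ (n-1) * (M / 2 ^ (n-1))) * 2
      = X + 2 * M + 2 ^ n * (-(M / 2 ^ (n-1))) := by
    rw [← h2]; ring
  rw [this, Int.add_mul_emod_self_left]
end
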